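/- Let l ≥ 1 and let A = ℂ[a_0,…,a_l] be a polynomial ring, with the ℂ-algebra involution ι defined by ι(a_i) = −a_i for all i. Define c_k = Σ_{i+j=k, 0≤i,j≤l} a_i a_j for 0 ≤ k ≤ 2l (the coefficients of the square (Σ_{i=0}^{l} a_i u^{l−i})²), and let R be the ℂ-subalgebra of A generated by c_0, …, c_{2l}. Let A^ι be the subring of ι-invariants (the polynomials all of whose monomials have even total degree). Then R ⊆ A^ι, R and A^ι have the same field of fractions, A^ι is integral over R, A^ι is integrally closed in its fraction field, and hence A^ι is the integral closure of R in its fraction field. -/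

import Mathlib

/-- The ℂ-algebra involution `ι` of `A = ℂ[a₀, …, a_l]` with `ι (aᵢ) = -aᵢ`. -/
noncomputable def negInvolution (l : ℕ) :
    MvPolynomial (Fin (l + 1)) ℂ →ₐ[ℂ] MvPolynomial (Fin (l + 1)) ℂ :=
  MvPolynomial.aeval (fun i : Fin (l + 1) => -MvPolynomial.X i)

/-- The invariant subring `A^ι`. -/
noncomputable def invSub (l : ℕ) : Subalgebra ℂ (MvPolynomial (Fin (l + 1)) ℂ) :=
  AlgHom.equalizer (negInvolution l) (AlgHom.id ℂ (MvPolynomial (Fin (l + 1)) ℂ))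

/-- `c_k = Σ_{i+j=k} aᵢ aⱼ`, the coefficients of `(Σ_{i=0}^{l} aᵢ u^{l-i})²`. -/
noncomputable def cSym (l : ℕ) (k : ℕ) : MvPolynomial (Fin (l + 1)) ℂ :=
  ∑ i : Fin (l + 1), ∑ j : Fin (l + 1),
    if (i : ℕ) + (j : ℕ) = k then MvPolynomial.X i * MvPolynomial.X j else 0

/-- The subalgebra `R` of `A` generated by `c₀, …, c_{2l}`. -/
noncomputable def cSubR (l : ℕ) : Subalgebra ℂ (MvPolynomial (Fin (l + 1)) ℂ) :=
  Algebra.adjoin ℂ (cSym l '' Set.Iic (2 * l))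

namespace MiddleAux

set_option maxRecDepth 10000
set_option synthInstance.maxHeartbeats 1000000
set_option maxHeartbeats 1000000

open MvPolynomial

abbrev Amv (l : ℕ) := MvPolynomial (Fin (l + 1)) ℂ

lemma negInv_monomial (l : ℕ) (m : Fin (l + 1) →₀ ℕ) (c : ℂ) :
    negInvolution l (monomial m c) =
      ((-1 : Amv l) ^ (Finsupp.degree m)) * monomial m c := by
  rw [negInvolution, aeval_monomial, monomial_eq, Finsupp.prod, Finsupp.prod]
  rw [Finset.prod_congr rfl (fun i _ => neg_pow (X i : Amv l) (m i)),
    Finset.prod_mul_distrib, Finset.prod_pow_eq_pow_sum]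
  rw [Finsupp.degree_apply]
  push_cast
  rw [MvPolynomial.algebraMap_eq]
  ring

lemma coeff_negInv (l : ℕ) (f : Amv l) (m : Fin (l + 1) →₀ ℕ) :
    coeff m (negInvolution l f) = (-1 : ℂ) ^ (Finsupp.degree m) * coeff m f := by
  conv_lhs => rw [f.as_sum, map_sum]
  rw [MvPolynomial.coeff_sum]
  have h1 : ∀ v : Fin (l+1) →₀ ℕ,
      coeff m (negInvolution l (monomial v (coeff v f)))
        = (-1 : ℂ) ^ (Finsupp.degree v) * (if v = m then coeff v f else 0) := by
    intro v
    rw [negInv_monomial]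
    have : ((-1 : Amv l) ^ (Finsupp.degree v)) = C ((-1 : ℂ) ^ (Finsupp.degree v)) := by
      rw [map_pow, map_neg, map_one]
    rw [this, coeff_C_mul, coeff_monomial]
  simp_rw [h1]
  rw [Finset.sum_eq_single m (fun b _ hb => by rw [if_neg hb, mul_zero])
    (fun hm => by rw [if_pos rfl, notMem_support_iff.mp hm, mul_zero])]
  rw [if_pos rfl]

lemma mem_invSub {l : ℕ} {f : Amv l} : f ∈ invSub l ↔ negInvolution l f = f := Iff.rfl

lemma invSub_coeff {l : ℕ} {f : Amv l} (hf : f ∈ invSub l) (m : Fin (l + 1) →₀ ℕ)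
    (hm : ¬ Even (Finsupp.degree m)) : coeff m f = 0 := by
  have := coeff_negInv l f m
  rw [mem_invSub.mp hf] at this
  rw [((Nat.not_even_iff_odd.mp hm)).neg_one_pow, neg_one_mul] at this
  linear_combination (1/2 : ℂ) * this

lemma cSym_invariant (l k : ℕ) : cSym l k ∈ invSub l := by
  rw [mem_invSub, cSym, map_sum]
  refine Finset.sum_congr rfl fun i _ => ?_
  rw [map_sum]
  refine Finset.sum_congr rfl fun j _ => ?_
  rw [apply_ite (negInvolution l), map_zero, map_mul]
  simp only [negInvolution, aeval_X]
  rw [neg_mul_neg]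

lemma cSym_zero' (l : ℕ) : cSym l 0 = X 0 * X 0 := by
  rw [cSym]
  rw [Finset.sum_eq_single (0 : Fin (l + 1))]
  · rw [Finset.sum_eq_single (0 : Fin (l + 1))]
    · simp
    · intro j _ hj
      rw [if_neg]
      intro h
      apply hj
      ext
      simp only [Fin.val_zero] at h ⊢
      omega
    · simp
  · intro i _ hi
    refine Finset.sum_eq_zero fun j _ => ?_
    rw [if_neg]
    intro h
    apply hi
    ext
    simp only [Fin.val_zero] at h ⊢
    omega
  · simp

lemma cSym_homog (l k : ℕ) : (cSym l k).IsHomogeneous 2 := by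
  refine MvPolynomial.IsHomogeneous.sum _ _ _ fun i _ => ?_
  refine MvPolynomial.IsHomogeneous.sum _ _ _ fun j _ => ?_
  split
  · exact (isHomogeneous_X _ _).mul (isHomogeneous_X _ _)
  · exact isHomogeneous_zero _ _ _

lemma cSym_eq (l k : ℕ) (hk : k ≤ l) :
    cSym l k = ∑ i : Fin (k + 1),
      X (Fin.castLE (by omega) i) * X (Fin.castLE (by omega) i.rev) := by
  rw [cSym, ← Finset.sum_product']
  rw [← Finset.sum_filter]
  refine Finset.sum_nbij' (i := fun p => (⟨min (p.1 : ℕ) k, by omega⟩ : Fin (k + 1)))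
    (j := fun a => (Fin.castLE (by omega) a, Fin.castLE (by omega) a.rev))
    ?_ ?_ ?_ ?_ ?_
  · intro p _; exact Finset.mem_univ _
  · intro a _
    simp only [Finset.mem_filter, Fin.coe_castLE, Fin.val_rev]
    exact ⟨Finset.mem_product.mpr ⟨Finset.mem_univ _, Finset.mem_univ _⟩, by omega⟩
  · intro p hp
    simp only [Finset.mem_filter, Finset.mem_univ, true_and] at hp
    have h1 : (p.1 : ℕ) ≤ k := by omega
    have h2 : (p.2 : ℕ) = k - (p.1 : ℕ) := by omega
    refine Prod.ext ?_ ?_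
    · ext
      simp only [Fin.coe_castLE]
      omega
    · ext
      simp only [Fin.coe_castLE, Fin.val_rev]
      omega
  · intro a _
    ext
    simp only [Fin.coe_castLE]
    omega
  · intro p hp
    simp only [Finset.mem_filter, Finset.mem_univ, true_and] at hp
    have h1 : (p.1 : ℕ) ≤ k := by omega
    congr 1
    · congr 1
      ext
      simp only [Fin.coe_castLE]
      omega
    · congr 1
      ext
      simp only [Fin.coe_castLE, Fin.val_rev]
      omega

lemma cSym_mem {l k : ℕ} (hk : k ≤ 2 * l) : cSym l k ∈ cSubR l :=
  Algebra.subset_adjoin ⟨k, hk, rfl⟩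

def good (l : ℕ) (x : Amv l) : Prop := ∃ n : ℕ, cSym l 0 ^ n * x ∈ cSubR l

lemma good_of_mem {l : ℕ} {x : Amv l} (hx : x ∈ cSubR l) : good l x :=
  ⟨0, by simpa using hx⟩

lemma good_bump {l : ℕ} {x : Amv l} {n : ℕ} (h : cSym l 0 ^ n * x ∈ cSubR l)
    {n' : ℕ} (hn : n ≤ n') : cSym l 0 ^ n' * x ∈ cSubR l := by
  obtain ⟨d, rfl⟩ := Nat.exists_eq_add_of_le hn
  have : cSym l 0 ^ (n + d) * x = cSym l 0 ^ d * (cSym l 0 ^ n * x) := by ring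
  rw [this]
  exact mul_mem (pow_mem (cSym_mem (by omega)) d) h

lemma good_mul {l : ℕ} {x y : Amv l} (hx : good l x) (hy : good l y) :
    good l (x * y) := by
  obtain ⟨n, hn⟩ := hx; obtain ⟨m, hm⟩ := hy
  exact ⟨n + m, by rw [show cSym l 0 ^ (n + m) * (x * y)
    = (cSym l 0 ^ n * x) * (cSym l 0 ^ m * y) by ring]; exact mul_mem hn hm⟩

lemma good_add {l : ℕ} {x y : Amv l} (hx : good l x) (hy : good l y) :
    good l (x + y) := by
  obtain ⟨n, hn⟩ := hx; obtain ⟨m, hm⟩ := hy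
  refine ⟨n + m, ?_⟩
  rw [mul_add]
  exact add_mem (good_bump hn (by omega)) (good_bump hm (by omega))

lemma good_neg {l : ℕ} {x : Amv l} (hx : good l x) : good l (-x) := by
  obtain ⟨n, hn⟩ := hx
  exact ⟨n, by rw [mul_neg]; exact neg_mem hn⟩

lemma good_sub {l : ℕ} {x y : Amv l} (hx : good l x) (hy : good l y) :
    good l (x - y) := by
  rw [sub_eq_add_neg]; exact good_add hx (good_neg hy)

lemma good_smul {l : ℕ} (c : ℂ) {x : Amv l} (hx : good l x) : good l (C c * x) := by
  obtain ⟨n, hn⟩ := hx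
  refine ⟨n, ?_⟩
  rw [show cSym l 0 ^ n * (C c * x) = C c * (cSym l 0 ^ n * x) by ring]
  have hc : (C c : Amv l) ∈ cSubR l := by
    rw [← MvPolynomial.algebraMap_eq]; exact (cSubR l).algebraMap_mem c
  exact mul_mem hc hn

lemma good_sum {l : ℕ} {ι : Type*} (s : Finset ι) (f : ι → Amv l)
    (hf : ∀ i ∈ s, good l (f i)) : good l (∑ i ∈ s, f i) := by
  classical
  induction s using Finset.induction_on with
  | empty => exact good_of_mem (by simpa using zero_mem (cSubR l))
  | insert _ _ hi ih =>
    rename_i a s'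
    rw [Finset.sum_insert hi]
    exact good_add (hf a (by simp)) (ih fun i hi' => hf i (by simp [hi']))

lemma good_pair {l : ℕ} {a b : Fin (l + 1)} (ha : good l (X 0 * X a))
    (hb : good l (X 0 * X b)) : good l (X a * X b) := by
  obtain ⟨n, hn⟩ := ha
  obtain ⟨m, hm⟩ := hb
  refine ⟨n + m + 1, ?_⟩
  have : cSym l 0 ^ (n + m + 1) * (X a * X b)
      = (cSym l 0 ^ n * (X 0 * X a)) * (cSym l 0 ^ m * (X 0 * X b)) := by
    rw [cSym_zero']; ring
  rw [this]
  exact mul_mem hn hm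

lemma good_X0 (l : ℕ) : ∀ j : Fin (l + 1), good l (X 0 * X j) := by
  suffices H : ∀ k : ℕ, ∀ j : Fin (l + 1), (j : ℕ) = k → good l (X 0 * X j) from
    fun j => H j j rfl
  intro k
  induction k using Nat.strong_induction_on with
  | _ k ih =>
  intro j hj
  rcases Nat.eq_zero_or_pos k with h0 | hpos
  · have hj0 : j = 0 := by ext; simp only [Fin.val_zero]; omega
    subst hj0
    rw [← cSym_zero' l]
    exact good_of_mem (cSym_mem (by omega))
  · have hkl : k ≤ l := by omega
    set t : Fin (k + 1) → Amv l := fun i =>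
      X (Fin.castLE (by omega) i) * X (Fin.castLE (by omega) i.rev) with ht
    have heq : cSym l k = ∑ i : Fin (k + 1), t i := cSym_eq l k hkl
    have hlast : (Fin.last k) ∈ (Finset.univ.erase (0 : Fin (k + 1))) := by
      rw [Finset.mem_erase]
      refine ⟨?_, Finset.mem_univ _⟩
      intro h
      have := congrArg Fin.val h
      simp only [Fin.val_last, Fin.val_zero] at this
      omega
    have hsplit : cSym l k
        = t 0 + (t (Fin.last k) + ∑ i ∈ (Finset.univ.erase 0).erase (Fin.last k), t i) := by
      rw [heq, ← Finset.add_sum_erase _ t (Finset.mem_univ 0), ← Finset.add_sum_erase _ t hlast]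
    have h0t : t 0 = X 0 * X j := by
      have e1 : (Fin.castLE (Nat.succ_le_succ hkl) (0 : Fin (k + 1))) = (0 : Fin (l + 1)) := by
        ext; simp
      have e2 : (Fin.castLE (Nat.succ_le_succ hkl) ((0 : Fin (k + 1)).rev)) = j := by
        ext; simp only [Fin.coe_castLE, Fin.val_rev, Fin.val_zero]; omega
      simp only [ht]
      rw [e1, e2]
    have hlt : t (Fin.last k) = X j * X 0 := by
      have e1 : (Fin.castLE (Nat.succ_le_succ hkl) (Fin.last k)) = j := by
        ext; simp only [Fin.coe_castLE, Fin.val_last]; omega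
      have e2 : (Fin.castLE (Nat.succ_le_succ hkl) ((Fin.last k).rev)) = (0 : Fin (l + 1)) := by
        ext; simp only [Fin.coe_castLE, Fin.val_rev, Fin.val_last, Fin.val_zero]; omega
      simp only [ht]
      rw [e1, e2]
    have hid2 : (2 : Amv l) * (X 0 * X j)
        = cSym l k - ∑ i ∈ (Finset.univ.erase 0).erase (Fin.last k), t i := by
      rw [hsplit, h0t, hlt]; ring
    have h2 : (C (2⁻¹ : ℂ) : Amv l) * 2 = 1 := by
      have h21 : ((2 : Amv l)) = C (2 : ℂ) := by
        rw [map_ofNat]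
      rw [h21, ← C_mul]
      norm_num
    have hid : X 0 * X j
        = C (2⁻¹ : ℂ) * (cSym l k - ∑ i ∈ (Finset.univ.erase 0).erase (Fin.last k), t i) := by
      rw [← hid2, ← mul_assoc, h2, one_mul]
    rw [hid]
    refine good_smul _ (good_sub (good_of_mem (cSym_mem (by omega))) (good_sum _ _ ?_))
    intro i hi
    rw [Finset.mem_erase, Finset.mem_erase] at hi
    have hine : (i : ℕ) ≠ k := fun h => hi.1 (by ext; simp [h])
    have hi0 : (i : ℕ) ≠ 0 := fun h => hi.2.1 (by ext; simp [h])
    have hik : (i : ℕ) < k + 1 := i.isLt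
    refine good_pair (ih (i : ℕ) (by omega) (Fin.castLE (by omega) i) (by simp))
      (ih (k - (i : ℕ)) (by omega) (Fin.castLE (by omega) i.rev) ?_)
    simp only [Fin.coe_castLE, Fin.val_rev]
    omega

lemma good_XX (l : ℕ) (i j : Fin (l + 1)) : good l (X i * X j) :=
  good_pair (good_X0 l i) (good_X0 l j)

lemma degree_eq_sum {n : ℕ} (m : Fin n →₀ ℕ) : Finsupp.degree m = ∑ i, m i := by
  rw [Finsupp.degree]
  refine Finset.sum_subset (Finset.subset_univ _) ?_
  intro x _ hx
  simpa [Finsupp.mem_support_iff] using hx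

lemma degree_add {n : ℕ} (a b : Fin n →₀ ℕ) :
    Finsupp.degree (a + b) = Finsupp.degree a + Finsupp.degree b := by
  simp_rw [degree_eq_sum, Finsupp.add_apply, Finset.sum_add_distrib]

lemma degree_single {n : ℕ} (i : Fin n) (c : ℕ) :
    Finsupp.degree (Finsupp.single i c) = c := by
  rw [degree_eq_sum]
  simp [Finsupp.single_apply]

noncomputable def goodSub (l : ℕ) : Subalgebra ℂ (Amv l) where
  carrier := {x | good l x}
  mul_mem' := good_mul
  add_mem' := good_add
  one_mem' := good_of_mem (one_mem _)
  zero_mem' := good_of_mem (zero_mem _)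
  algebraMap_mem' := fun c => good_of_mem ((cSubR l).algebraMap_mem c)

lemma even_monomial_mem {l : ℕ} (S : Subalgebra ℂ (Amv l))
    (hX : ∀ i j : Fin (l + 1), X i * X j ∈ S) (m : Fin (l + 1) →₀ ℕ)
    (hm : Even (Finsupp.degree m)) : monomial m (1 : ℂ) ∈ S := by
  suffices H : ∀ d : ℕ, ∀ m : Fin (l + 1) →₀ ℕ, Finsupp.degree m = d → Even d →
      monomial m (1 : ℂ) ∈ S from H _ m rfl (by rwa [← (rfl : Finsupp.degree m = _)] at hm)
  intro d
  induction d using Nat.strong_induction_on with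
  | _ d ih =>
  intro m hd he
  rcases Nat.eq_zero_or_pos d with h0 | hpos
  · subst h0
    have hm0 : m = 0 := (Finsupp.degree_eq_zero_iff m).mp hd
    subst hm0
    simpa [monomial_zero'] using S.algebraMap_mem (1 : ℂ)
  · have hd2 : 2 ≤ d := by
      rcases he with ⟨r, hr⟩; omega
    have hm0 : m ≠ 0 := by
      intro h; subst h; simp [Finsupp.degree] at hd; omega
    obtain ⟨i, hi⟩ : ∃ i, m i ≠ 0 := by
      by_contra h
      push_neg at h
      exact hm0 (Finsupp.ext fun a => h a)
    set m1 := m - Finsupp.single i 1 with hm1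
    have hmeq : m = Finsupp.single i 1 + m1 := by
      ext a
      simp only [hm1, Finsupp.add_apply, Finsupp.tsub_apply, Finsupp.single_apply]
      rcases eq_or_ne i a with rfl | hne
      · simp; omega
      · simp [hne]
    have hdm1 : Finsupp.degree m1 = d - 1 := by
      have := degree_add (Finsupp.single i 1) m1
      rw [← hmeq, hd, degree_single] at this
      omega
    have hm10 : m1 ≠ 0 := by
      intro h
      rw [h] at hdm1
      simp [Finsupp.degree] at hdm1
      omega
    obtain ⟨j, hj⟩ : ∃ j, m1 j ≠ 0 := by
      by_contra h
      push_neg at h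
      exact hm10 (Finsupp.ext fun a => h a)
    set m2 := m1 - Finsupp.single j 1 with hm2
    have hmeq2 : m1 = Finsupp.single j 1 + m2 := by
      ext a
      simp only [hm2, Finsupp.add_apply, Finsupp.tsub_apply, Finsupp.single_apply]
      rcases eq_or_ne j a with rfl | hne
      · simp; omega
      · simp [hne]
    have hdm2 : Finsupp.degree m2 = d - 2 := by
      have := degree_add (Finsupp.single j 1) m2
      rw [← hmeq2, hdm1, degree_single] at this
      omega
    have hsplit : monomial m (1 : ℂ) = (X i * X j) * monomial m2 1 := by
      simp only [X, monomial_mul, hmeq, hmeq2, add_assoc, one_mul, mul_one]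
    rw [hsplit]
    refine mul_mem (hX i j) (ih (d - 2) (by omega) m2 hdm2 ?_)
    rcases he with ⟨r, hr⟩
    exact ⟨r - 1, by omega⟩

lemma good_of_invariant {l : ℕ} {f : Amv l} (hf : f ∈ invSub l) : good l f := by
  have : (∑ v ∈ f.support, monomial v (coeff v f)) ∈ goodSub l := by
    refine sum_mem fun v hv => ?_
    have hcv : coeff v f ≠ 0 := mem_support_iff.mp hv
    have hev : Even (Finsupp.degree v) := by
      by_contra h
      exact hcv (invSub_coeff hf v h)
    have : monomial v (coeff v f) = C (coeff v f) * monomial v 1 := by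
      rw [C_mul_monomial, mul_one]
    rw [this]
    refine mul_mem ?_ (even_monomial_mem (goodSub l) (fun i j => good_XX l i j) v hev)
    rw [← MvPolynomial.algebraMap_eq]
    exact (goodSub l).algebraMap_mem _
  rw [← f.as_sum] at this
  exact this

lemma c0_ne_zero (l : ℕ) : cSym l 0 ≠ 0 := by
  rw [cSym_zero']
  exact mul_ne_zero (X_ne_zero _) (X_ne_zero _)

lemma conj2 (l : ℕ) : ∀ x : Amv l, x ∈ invSub l →
    ∃ r s : Amv l, r ∈ cSubR l ∧ s ∈ cSubR l ∧ s ≠ 0 ∧ s * x = r := by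
  intro x hx
  obtain ⟨n, hn⟩ := good_of_invariant hx
  exact ⟨cSym l 0 ^ n * x, cSym l 0 ^ n, hn, pow_mem (cSym_mem (by omega)) n,
    pow_ne_zero n (c0_ne_zero l), rfl⟩

lemma zeroLocus_subset (l : ℕ) (x : Fin (l + 1) → ℂ)
    (hx : ∀ k ≤ 2 * l, eval x (cSym l k) = 0) : x = 0 := by
  suffices H : ∀ d : ℕ, ∀ j : Fin (l + 1), (j : ℕ) = d → x j = 0 by
    funext j; exact H j j rfl
  intro d
  induction d using Nat.strong_induction_on with
  | _ d ih =>
  intro j hj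
  have h2 := hx (2 * d) (by omega)
  rw [cSym] at h2
  simp only [map_sum, apply_ite (eval x), map_mul, eval_X, map_zero] at h2
  have key : ∀ a : Fin (l + 1), a ∈ Finset.univ → a ≠ j →
      (∑ b : Fin (l + 1), if (a : ℕ) + (b : ℕ) = 2 * d then x a * x b else 0) = 0 := by
    intro a _ ha
    refine Finset.sum_eq_zero fun b _ => ?_
    rcases eq_or_ne ((a : ℕ) + (b : ℕ)) (2 * d) with hab | hab
    · rw [if_pos hab]
      rcases lt_or_ge (a : ℕ) d with h | h
      · rw [ih a h a rfl, zero_mul]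
      · have hbd : (b : ℕ) < d := by
          have : (a : ℕ) ≠ d := fun hh => ha (Fin.ext (by omega))
          omega
        rw [ih b hbd b rfl, mul_zero]
    · rw [if_neg hab]
  rw [Finset.sum_eq_single j key (fun h => absurd (Finset.mem_univ j) h),
    Finset.sum_eq_single j
      (fun b _ hb => if_neg (fun hcon => hb (Fin.ext (by omega))))
      (fun h => absurd (Finset.mem_univ j) h),
    if_pos (by omega)] at h2
  exact mul_self_eq_zero.mp h2

lemma X_mem_radical (l : ℕ) (i : Fin (l + 1)) :
    X i ∈ (Ideal.span (cSym l '' Set.Iic (2 * l))).radical := by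
  rw [← MvPolynomial.vanishingIdeal_zeroLocus_eq_radical (K := ℂ),
    MvPolynomial.mem_vanishingIdeal_iff]
  intro x hxz
  rw [MvPolynomial.mem_zeroLocus_iff] at hxz
  have hx : ∀ k ≤ 2 * l, eval x (cSym l k) = 0 := fun k hk => by
    simpa [MvPolynomial.coe_aeval_eq_eval] using hxz _ (Ideal.subset_span ⟨k, hk, rfl⟩)
  rw [aeval_X, zeroLocus_subset l x hx]
  simp

lemma exists_uniform_pow (l : ℕ) : ∃ N, 2 ≤ N ∧ ∀ i : Fin (l + 1),
    X i ^ N ∈ Ideal.span (cSym l '' Set.Iic (2 * l)) := by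
  have h := fun i : Fin (l + 1) => Ideal.mem_radical_iff.mp (X_mem_radical l i)
  choose N hN using h
  refine ⟨(∑ i, N i) + 2, by omega, fun i => ?_⟩
  have hle : N i ≤ (∑ i, N i) + 2 :=
    le_trans (Finset.single_le_sum (fun _ _ => Nat.zero_le _) (Finset.mem_univ i)) (by omega)
  rw [show (∑ i, N i) + 2 = ((∑ i, N i) + 2 - N i) + N i by omega, pow_add]
  exact Ideal.mul_mem_left _ _ (hN i)

lemma homogComp_mul {σ : Type*} (c g : MvPolynomial σ ℂ) (e n : ℕ)
    (hc : c.IsHomogeneous e) (he : e ≤ n) :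
    homogeneousComponent n (g * c) = homogeneousComponent (n - e) g * c := by
  conv_lhs => rw [← sum_homogeneousComponent g, Finset.sum_mul, map_sum]
  have key : ∀ i ∈ Finset.range (g.totalDegree + 1),
      homogeneousComponent n (homogeneousComponent i g * c)
        = if n - e = i then homogeneousComponent i g * c else 0 := by
    intro i _
    have hmem : homogeneousComponent i g * c ∈ homogeneousSubmodule σ ℂ (i + e) :=
      (mem_homogeneousSubmodule _ _).mpr
        ((homogeneousComponent_isHomogeneous i g).mul hc)
    rw [homogeneousComponent_of_mem hmem]
    rcases eq_or_ne (n - e) i with h | h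
    · rw [if_pos h, if_pos (by omega)]
    · rw [if_neg h, if_neg (by omega)]
  rw [Finset.sum_congr rfl key, Finset.sum_ite_eq _ (n - e) _]
  split
  · rfl
  · rename_i hnot
    rw [homogeneousComponent_eq_zero, zero_mul]
    simp only [Finset.mem_range] at hnot
    omega

lemma exists_homog_cert (l : ℕ) {N : ℕ} (hN : 2 ≤ N)
    (h : ∀ i : Fin (l + 1), X i ^ N ∈ Ideal.span (cSym l '' Set.Iic (2 * l))) :
    ∀ i : Fin (l + 1), ∃ g : ℕ → Amv l,
      (∀ k, (g k).totalDegree ≤ N - 2) ∧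
      X i ^ N = ∑ k ∈ Finset.range (2 * l + 1), g k * cSym l k := by
  intro i
  have hmem := h i
  rw [Ideal.span, Finsupp.mem_span_image_iff_linearCombination] at hmem
  obtain ⟨cc, hsupp, hsum⟩ := hmem
  rw [Finsupp.linearCombination_apply, Finsupp.sum] at hsum
  have hsub : cc.support ⊆ Finset.range (2 * l + 1) := by
    intro k hk
    have := (Finsupp.mem_supported _ cc).mp hsupp hk
    simp only [Set.mem_Iic] at this
    simp only [Finset.mem_range]
    omega
  have hsum2 : X i ^ N = ∑ k ∈ Finset.range (2 * l + 1), cc k * cSym l k := by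
    rw [← hsum, Finset.sum_subset hsub (fun k _ hk => by
      rw [Finsupp.notMem_support_iff.mp hk, zero_smul])]
    exact Finset.sum_congr rfl fun k _ => smul_eq_mul _ _
  refine ⟨fun k => homogeneousComponent (N - 2) (cc k), fun k =>
    (homogeneousComponent_isHomogeneous _ _).totalDegree_le, ?_⟩
  have happ := congrArg (homogeneousComponent N) hsum2
  rw [map_sum] at happ
  have hX : homogeneousComponent N (X i ^ N : Amv l) = X i ^ N := by
    have hmem : (X i ^ N : Amv l) ∈ homogeneousSubmodule (Fin (l + 1)) ℂ N :=
      (mem_homogeneousSubmodule _ _).mpr (isHomogeneous_X_pow _ _)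
    rw [homogeneousComponent_of_mem hmem, if_pos rfl]
  rw [hX] at happ
  rw [happ]
  refine Finset.sum_congr rfl fun k _ => ?_
  rw [homogComp_mul (cSym l k) (cc k) 2 N (cSym_homog l k) (by omega)]

lemma span_top (l : ℕ) {N : ℕ} (hN : 2 ≤ N)
    (hc : ∀ i : Fin (l + 1), ∃ g : ℕ → Amv l,
      (∀ k, (g k).totalDegree ≤ N - 2) ∧
      X i ^ N = ∑ k ∈ Finset.range (2 * l + 1), g k * cSym l k) :
    ∀ f : Amv l, f ∈ Submodule.span (cSubR l)
      {x : Amv l | ∃ m : Fin (l + 1) →₀ ℕ, Finsupp.degree m < (l + 1) * N ∧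
        x = monomial m 1} := by
  set D := (l + 1) * N with hD
  set M := Submodule.span (cSubR l)
    {x : Amv l | ∃ m : Fin (l + 1) →₀ ℕ, Finsupp.degree m < D ∧ x = monomial m 1} with hM
  have hmul : ∀ r, r ∈ cSubR l → ∀ x ∈ M, r * x ∈ M := by
    intro r hr x hx
    have := M.smul_mem ⟨r, hr⟩ hx
    rwa [Subalgebra.smul_def, smul_eq_mul] at this
  suffices H : ∀ d : ℕ, ∀ f : Amv l, f.totalDegree ≤ d → f ∈ M from fun f => H _ f le_rfl
  intro d
  induction d using Nat.strong_induction_on with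
  | _ d ih =>
  intro f hf
  have hmono : ∀ v : Fin (l + 1) →₀ ℕ, Finsupp.degree v ≤ d → monomial v (1 : ℂ) ∈ M := by
    intro v hv
    rcases lt_or_ge (Finsupp.degree v) D with hvD | hvD
    · exact Submodule.subset_span ⟨v, hvD, rfl⟩
    · -- some exponent is at least N
      obtain ⟨i, hi⟩ : ∃ i, N ≤ v i := by
        by_contra hcon
        push_neg at hcon
        have : Finsupp.degree v ≤ (l + 1) * (N - 1) := by
          rw [degree_eq_sum]
          calc ∑ i, v i ≤ ∑ _i : Fin (l + 1), (N - 1) :=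
                Finset.sum_le_sum fun i _ => by have := hcon i; omega
            _ = (l + 1) * (N - 1) := by
                rw [Finset.sum_const, Finset.card_univ, Fintype.card_fin, smul_eq_mul]
        have : (l + 1) * (N - 1) < D := by
          rw [hD]
          have : 0 < l + 1 := by omega
          nlinarith [Nat.sub_lt (by omega : 0 < N) (by omega : 0 < 1)]
        omega
      set v' := v - Finsupp.single i N with hv'
      have hveq : v = Finsupp.single i N + v' := by
        ext a
        simp only [hv', Finsupp.add_apply, Finsupp.tsub_apply, Finsupp.single_apply]
        rcases eq_or_ne i a with rfl | hne
        · simp; omega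
        · simp [hne]
      have hdv' : Finsupp.degree v' = Finsupp.degree v - N := by
        have := degree_add (Finsupp.single i N) v'
        rw [← hveq, degree_single] at this
        omega
      obtain ⟨g, hg, hgeq⟩ := hc i
      have hsplit : monomial v (1 : ℂ)
          = ∑ k ∈ Finset.range (2 * l + 1), cSym l k * (g k * monomial v' 1) := by
        have : monomial v (1 : ℂ) = X i ^ N * monomial v' 1 := by
          rw [X_pow_eq_monomial, monomial_mul, one_mul, ← hveq]
        rw [this, hgeq, Finset.sum_mul]
        exact Finset.sum_congr rfl fun k _ => by ring
      rw [hsplit]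
      refine sum_mem fun k hk => ?_
      refine hmul _ (cSym_mem (by simp only [Finset.mem_range] at hk; omega)) _ ?_
      have htd : (g k * monomial v' (1 : ℂ)).totalDegree ≤ d - 2 := by
        refine le_trans (totalDegree_mul _ _) ?_
        have h1 := hg k
        have h2 : (monomial v' (1 : ℂ)).totalDegree ≤ Finsupp.degree v' := by
          refine le_trans (totalDegree_monomial_le _ _) (le_of_eq ?_)
          simp [Finsupp.sum, Finsupp.degree]; rfl
        have hDd : D ≤ d := le_trans hvD hv
        have hND : N ≤ D := by rw [hD]; nlinarith
        omega
      exact ih (d - 2) (by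
        have hDd : D ≤ d := le_trans hvD hv
        have hND : N ≤ D := by rw [hD]; nlinarith
        omega) _ htd
  -- decompose f into monomials
  have : (∑ v ∈ f.support, monomial v (coeff v f)) ∈ M := by
    refine sum_mem fun v hv => ?_
    have hvd : Finsupp.degree v ≤ d := by
      refine le_trans ?_ hf
      exact le_totalDegree hv
    have : monomial v (coeff v f) = C (coeff v f) * monomial v 1 := by
      rw [C_mul_monomial, mul_one]
    rw [this]
    refine hmul _ ?_ _ (hmono v hvd)
    rw [← MvPolynomial.algebraMap_eq]
    exact (cSubR l).algebraMap_mem _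
  rw [← f.as_sum] at this
  exact this

lemma conj3 (l : ℕ) : ∀ x : Amv l,
    ((Subalgebra.val (cSubR l)).toRingHom).IsIntegralElem x := by
  obtain ⟨N, hN2, hpow⟩ := exists_uniform_pow l
  have hcert := exists_homog_cert l hN2 hpow
  have hspan := span_top l hN2 hcert
  have hfin : {x : Amv l | ∃ m : Fin (l + 1) →₀ ℕ, Finsupp.degree m < (l + 1) * N ∧
      x = monomial m 1}.Finite := by
    have hsub : {x : Amv l | ∃ m : Fin (l + 1) →₀ ℕ, Finsupp.degree m < (l + 1) * N ∧
        x = monomial m 1} ⊆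
        (fun m : Fin (l + 1) →₀ ℕ => monomial m (1 : ℂ)) ''
          {m | Finsupp.degree m ≤ (l + 1) * N} := by
      rintro y ⟨m, hm, rfl⟩
      exact ⟨m, le_of_lt hm, rfl⟩
    exact ((Finsupp.finite_of_degree_le _).image _).subset hsub
  have hFG : (⊤ : Subalgebra (cSubR l) (Amv l)).toSubmodule.FG := by
    rw [Submodule.fg_def]
    refine ⟨_, hfin, ?_⟩
    rw [Algebra.top_toSubmodule]
    exact le_antisymm le_top (fun f _ => hspan f)
  intro x
  exact IsIntegral.of_mem_of_fg ⊤ hFG x (by trivial)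

lemma conj45 (l : ℕ) (x : FractionRing (Amv l))
    (hfr : ∃ r s : Amv l, r ∈ invSub l ∧ s ∈ invSub l ∧ s ≠ 0 ∧
      x * algebraMap (Amv l) (FractionRing (Amv l)) s
        = algebraMap (Amv l) (FractionRing (Amv l)) r)
    (hint : (algebraMap (Amv l) (FractionRing (Amv l))).IsIntegralElem x) :
    ∃ a : Amv l, a ∈ invSub l ∧
      algebraMap (Amv l) (FractionRing (Amv l)) a = x := by
  obtain ⟨a, ha⟩ := IsIntegrallyClosed.isIntegral_iff.mp hint
  obtain ⟨r, s, hr, hs, hs0, heq⟩ := hfr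
  refine ⟨a, ?_, ha⟩
  have h1 : algebraMap (Amv l) (FractionRing (Amv l)) (a * s)
      = algebraMap (Amv l) (FractionRing (Amv l)) r := by
    rw [map_mul, ha, heq]
  have has : a * s = r := IsFractionRing.injective (Amv l) (FractionRing (Amv l)) h1
  have h2 : negInvolution l a * s = a * s := by
    have h3 := congrArg (negInvolution l) has
    rw [map_mul, mem_invSub.mp hs] at h3
    rw [h3, has, mem_invSub.mp hr]
  exact mul_right_cancel₀ hs0 h2

lemma integral_descend {l : ℕ} (S : Subalgebra ℂ (Amv l))
    {x : FractionRing (Amv l)}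
    (h : ((algebraMap (Amv l) (FractionRing (Amv l))).comp
      (Subalgebra.val S).toRingHom).IsIntegralElem x) :
    (algebraMap (Amv l) (FractionRing (Amv l))).IsIntegralElem x := by
  obtain ⟨p, hp, hp0⟩ := h
  refine ⟨p.map (Subalgebra.val S).toRingHom, hp.map _, ?_⟩
  rw [Polynomial.eval₂_map]
  exact hp0

lemma mem_invSub' : True := trivial

lemma conj1 (l : ℕ) : cSubR l ≤ invSub l := by
  apply Algebra.adjoin_le
  rintro _ ⟨k, -, rfl⟩
  exact cSym_invariant l k

end MiddleAux

/-- Let `A = ℂ[a₀,…,a_l]` with the involution `ι : aᵢ ↦ -aᵢ`, let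
`c_k = Σ_{i+j=k} aᵢ aⱼ` and let `R` be the subalgebra generated by `c₀, …, c_{2l}`.
Then `R ⊆ A^ι`, `R` and `A^ι` have the same field of fractions, `A^ι` is integral
over `R`, `A^ι` is integrally closed in its fraction field, and hence `A^ι` is the
integral closure of `R` in its fraction field. -/
theorem middle_block_invariants (l : ℕ) (hl : 1 ≤ l) :
    cSubR l ≤ invSub l ∧
    (∀ x : MvPolynomial (Fin (l + 1)) ℂ, x ∈ invSub l →
      ∃ r s : MvPolynomial (Fin (l + 1)) ℂ, r ∈ cSubR l ∧ s ∈ cSubR l ∧ s ≠ 0 ∧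
        s * x = r) ∧
    (∀ x : MvPolynomial (Fin (l + 1)) ℂ, x ∈ invSub l →
      ((Subalgebra.val (cSubR l)).toRingHom).IsIntegralElem x) ∧
    (∀ x : FractionRing (MvPolynomial (Fin (l + 1)) ℂ),
      (∃ r s : MvPolynomial (Fin (l + 1)) ℂ, r ∈ invSub l ∧ s ∈ invSub l ∧ s ≠ 0 ∧
        x * algebraMap (MvPolynomial (Fin (l + 1)) ℂ)
              (FractionRing (MvPolynomial (Fin (l + 1)) ℂ)) s
          = algebraMap (MvPolynomial (Fin (l + 1)) ℂ)
              (FractionRing (MvPolynomial (Fin (l + 1)) ℂ)) r) →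
      ((algebraMap (MvPolynomial (Fin (l + 1)) ℂ)
            (FractionRing (MvPolynomial (Fin (l + 1)) ℂ))).comp
          (Subalgebra.val (invSub l)).toRingHom).IsIntegralElem x →
      ∃ a : MvPolynomial (Fin (l + 1)) ℂ, a ∈ invSub l ∧
        algebraMap (MvPolynomial (Fin (l + 1)) ℂ)
            (FractionRing (MvPolynomial (Fin (l + 1)) ℂ)) a = x) ∧
    (∀ x : FractionRing (MvPolynomial (Fin (l + 1)) ℂ),
      (∃ r s : MvPolynomial (Fin (l + 1)) ℂ, r ∈ invSub l ∧ s ∈ invSub l ∧ s ≠ 0 ∧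
        x * algebraMap (MvPolynomial (Fin (l + 1)) ℂ)
              (FractionRing (MvPolynomial (Fin (l + 1)) ℂ)) s
          = algebraMap (MvPolynomial (Fin (l + 1)) ℂ)
              (FractionRing (MvPolynomial (Fin (l + 1)) ℂ)) r) →
      ((algebraMap (MvPolynomial (Fin (l + 1)) ℂ)
            (FractionRing (MvPolynomial (Fin (l + 1)) ℂ))).comp
          (Subalgebra.val (cSubR l)).toRingHom).IsIntegralElem x →
      ∃ a : MvPolynomial (Fin (l + 1)) ℂ, a ∈ invSub l ∧
        algebraMap (MvPolynomial (Fin (l + 1)) ℂ)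
            (FractionRing (MvPolynomial (Fin (l + 1)) ℂ)) a = x) := by
  refine ⟨MiddleAux.conj1 l, MiddleAux.conj2 l, fun x _ => MiddleAux.conj3 l x,
    fun x hfr hint => MiddleAux.conj45 l x hfr (MiddleAux.integral_descend _ hint),
    fun x hfr hint => MiddleAux.conj45 l x hfr (MiddleAux.integral_descend _ hint)⟩
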